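/- Let P(X) = X³ − X²(i+j+k) + X(i−j+k) + 1 in ℍ[X] (so P = (X−i)·(X−j)·(X−k) as a ∗-product). Then the maximum of |P(x)| over the unit sphere {x ∈ ℍ : |x| = 1} is attained at ỹ = (1−√19)/6 − i(5+√19)/12 + k(1−√19)/12. -/

import Mathlib

noncomputable def qi : Quaternion ℝ := ⟨0, 1, 0, 0⟩
noncomputable def qj : Quaternion ℝ := ⟨0, 0, 1, 0⟩
noncomputable def qk : Quaternion ℝ := ⟨0, 0, 0, 1⟩

/-- On the unit sphere, `‖P x‖²` collapses to `8(1 - a - b + ab + ad + a³)`. -/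
lemma normSq_P (x : Quaternion ℝ)
    (h : x.re^2 + x.imI^2 + x.imJ^2 + x.imK^2 = 1) :
    Quaternion.normSq (x^3 - x^2 * (qi + qj + qk) + x * (qi - qj + qk) + 1)
      = 8 * (1 - x.re - x.imI + x.re*x.imI + x.re*x.imK + x.re^3) := by
  rw [Quaternion.normSq_def']
  simp only [pow_succ, pow_zero, one_mul,
    Quaternion.re_mul, Quaternion.imI_mul, Quaternion.imJ_mul, Quaternion.imK_mul,
    Quaternion.re_add, Quaternion.imI_add, Quaternion.imJ_add, Quaternion.imK_add,
    Quaternion.re_sub, Quaternion.imI_sub, Quaternion.imJ_sub, Quaternion.imK_sub,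
    Quaternion.re_one, Quaternion.imI_one, Quaternion.imJ_one, Quaternion.imK_one]
  obtain ⟨a, b, c, d⟩ := x
  simp only at h ⊢
  simp only [qi, qj, qk]
  linear_combination (7 + 2*d + 4*d^2 - 2*d^3 + d^4 - 2*c - 2*c*d^2 + 4*c^2 - 2*c^2*d
    + 2*c^2*d^2 - 2*c^3 + c^4 - 6*b - 2*b*d^2 - 2*b*c^2 + 4*b^2 - 2*b^2*d + 2*b^2*d^2
    - 2*b^2*c + 2*b^2*c^2 - 2*b^3 + b^4 - 8*a + 4*a*d - 4*a*c + 4*a*b + 4*a^2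
    - 2*a^2*d + 2*a^2*d^2 - 2*a^2*c + 2*a^2*c^2 - 2*a^2*b + 2*a^2*b^2 + a^4) * h

/-- The scalar inequality, with an explicit SOS certificate. -/
lemma scalar_ineq (a b c d s : ℝ) (hs : s^2 = 19) (hs0 : 0 ≤ s)
    (h : a^2 + b^2 + c^2 + d^2 = 1) :
    8 * (1 - a - b + a*b + a*d + a^3) ≤ (430 + 38*s)/27 := by
  have hs4 : 4 ≤ s := by nlinarith
  have ha1 : a ≤ 1 := by nlinarith [sq_nonneg b, sq_nonneg c, sq_nonneg d, sq_nonneg (a-1)]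
  have hq : 0 ≤ (a - (1-s)/6)^2 * ((1 + 2*s)/6 - a) :=
    mul_nonneg (sq_nonneg _) (by nlinarith)
  have key : (430 + 38*s)/27 - 8 * (1 - a - b + a*b + a*d + a^3)
      = 8 * ((a - (1-s)/6)^2 * ((1 + 2*s)/6 - a)
          + ((a-1)/2 - b)^2 + (a/2 - d)^2 + c^2) := by
    linear_combination (1/9 - 2*a/3 - 2*s/27) * hs - 8 * h
  nlinarith [hq, sq_nonneg ((a-1)/2 - b), sq_nonneg (a/2 - d), sq_nonneg c]

/-- For `P(X) = X³ − X²(i+j+k) + X(i−j+k) + 1`, the maximum of `‖P‖` over the unit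
sphere of `ℍ` is attained at `ỹ = (1−√19)/6 − i(5+√19)/12 + k(1−√19)/12`. -/
theorem max_modulus_attained :
    let P : Quaternion ℝ → Quaternion ℝ :=
      fun x => x ^ 3 - x ^ 2 * (qi + qj + qk) + x * (qi - qj + qk) + 1
    let yt : Quaternion ℝ :=
      ⟨(1 - Real.sqrt 19) / 6, -(5 + Real.sqrt 19) / 12, 0, (1 - Real.sqrt 19) / 12⟩
    ‖yt‖ = 1 ∧ ∀ x : Quaternion ℝ, ‖x‖ = 1 → ‖P x‖ ≤ ‖P yt‖ := by
  intro P yt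
  set s := Real.sqrt 19 with hsdef
  have hs : s^2 = 19 := Real.sq_sqrt (by norm_num)
  have hs0 : 0 ≤ s := Real.sqrt_nonneg _
  have hcon : ((1 - s)/6)^2 + (-(5 + s)/12)^2 + (0:ℝ)^2 + ((1 - s)/12)^2 = 1 := by
    linear_combination (1/24) * hs
  have hytsq : Quaternion.normSq yt = 1 := by
    rw [Quaternion.normSq_def']
    simpa [yt] using hcon
  have hyt : ‖yt‖ = 1 := by
    have h2 := Quaternion.normSq_eq_norm_mul_self yt
    rw [hytsq] at h2
    nlinarith [norm_nonneg yt]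
  refine ⟨hyt, ?_⟩
  intro x hx
  obtain ⟨a, b, c, d⟩ := x
  have h : a^2 + b^2 + c^2 + d^2 = 1 := by
    have h2 := Quaternion.normSq_eq_norm_mul_self (⟨a,b,c,d⟩ : Quaternion ℝ)
    erw [hx, Quaternion.normSq_def'] at h2
    simpa using h2
  have e1 : Quaternion.normSq (P ⟨a,b,c,d⟩) = 8 * (1 - a - b + a*b + a*d + a^3) := by
    simp only [P]
    simpa using normSq_P ⟨a,b,c,d⟩ (by simpa using h)
  have e2 : Quaternion.normSq (P yt) = (430 + 38*s)/27 := by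
    simp only [P]
    rw [normSq_P yt (by simpa [yt] using hcon)]
    simp only [yt]
    linear_combination (1/3 - s/27) * hs
  have key : Quaternion.normSq (P ⟨a,b,c,d⟩) ≤ Quaternion.normSq (P yt) := by
    rw [e1, e2]
    exact scalar_ineq a b c d s hs hs0 h
  have n1 := Quaternion.normSq_eq_norm_mul_self (P ⟨a,b,c,d⟩)
  have n2 := Quaternion.normSq_eq_norm_mul_self (P yt)
  nlinarith [norm_nonneg (P ⟨a,b,c,d⟩), norm_nonneg (P yt), key]
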